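/- Suppose (μₙ), (αₙ), (βₙ), (γₙ) are nonnegative real sequences with αₙ > 0, satisfying μ_{n+1} ≤ μₙ − αₙβₙ + γₙ, ∑αᵢ = ∞, (αₙ) bounded and γₙ/αₙ → 0. If there exists ω : ℚ₊ → ℚ₊ such that for all ε > 0 and all n, βₙ ≤ ω(ε) implies μₙ ≤ ε, then μₙ → 0. -/

import Mathlib

open Filter Finset

/-- If (μₙ), (αₙ), (βₙ), (γₙ) are nonnegative real sequences with αₙ > 0,
μ_{n+1} ≤ μₙ − αₙβₙ + γₙ, ∑αᵢ = ∞, (αₙ) bounded, γₙ/αₙ → 0, and there is a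
modulus ω : ℚ₊ → ℚ₊ with βₙ ≤ ω(ε) ⟹ μₙ ≤ ε, then μₙ → 0. -/
theorem stmt12 (μ α β γ : ℕ → ℝ) (A : ℝ)
    (hμ : ∀ n, 0 ≤ μ n) (hα : ∀ n, 0 < α n) (hβ : ∀ n, 0 ≤ β n) (hγ : ∀ n, 0 ≤ γ n)
    (hrec : ∀ n, μ (n + 1) ≤ μ n - α n * β n + γ n)
    (hdiv : Tendsto (fun n => ∑ i ∈ Finset.range n, α i) atTop atTop)
    (hbd : ∀ n, α n ≤ A)
    (hquot : Tendsto (fun n => γ n / α n) atTop (nhds 0))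
    (ω : ℚ → ℚ) (hωpos : ∀ ε : ℚ, 0 < ε → 0 < ω ε)
    (hω : ∀ ε : ℚ, 0 < ε → ∀ n, β n ≤ (ω ε : ℝ) → μ n ≤ (ε : ℝ)) :
    Tendsto μ atTop (nhds 0) := by
  rw [Metric.tendsto_atTop]
  intro ε' hε'
  obtain ⟨q, hq0, hq2⟩ := exists_rat_btwn (show (0:ℝ) < ε'/2 by linarith)
  have hq0' : (0:ℚ) < q := by exact_mod_cast hq0
  set δ : ℝ := (ω q : ℝ) with hδdef
  have hδ : 0 < δ := by rw [hδdef]; exact_mod_cast hωpos q hq0'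
  set A' : ℝ := max A 1 with hA'def
  have hA'pos : 0 < A' := lt_of_lt_of_le one_pos (le_max_right _ _)
  have hαA' : ∀ n, α n ≤ A' := fun n => (hbd n).trans (le_max_left _ _)
  set c : ℝ := min (δ/2) ((q:ℝ)/A') with hcdef
  have hc : 0 < c := lt_min (by linarith) (div_pos hq0 hA'pos)
  obtain ⟨N, hN⟩ := (Metric.tendsto_atTop.mp hquot) c hc
  have hγc : ∀ n, N ≤ n → γ n ≤ c * α n := by
    intro n hn
    have h := hN n hn
    rw [Real.dist_eq, sub_zero, abs_of_nonneg (div_nonneg (hγ n) (hα n).le)] at h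
    have h2 := (div_lt_iff₀ (hα n)).mp h
    linarith
  have hbad : ∀ n, N ≤ n → δ < β n → μ (n+1) ≤ μ n - (δ/2) * α n := by
    intro n hn hβn
    have h1 := hrec n
    have h2 := hγc n hn
    have h3 : α n * δ ≤ α n * β n :=
      mul_le_mul_of_nonneg_left hβn.le (hα n).le
    have h4 : c ≤ δ/2 := min_le_left _ _
    nlinarith [(hα n).le]
  have hgood : ∀ M, N ≤ M → ∃ n, M ≤ n ∧ β n ≤ δ := by
    intro M hM
    by_contra h
    push_neg at h
    have key : ∀ k, μ (M + k) + (δ/2) * ∑ i ∈ Finset.Ico M (M + k), α i ≤ μ M := by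
      intro k
      induction k with
      | zero => simp
      | succ k ih =>
        have hle : M ≤ M + k := Nat.le_add_right _ _
        rw [show M + (k+1) = (M + k) + 1 from rfl, Finset.sum_Ico_succ_top hle]
        have hb := hbad (M + k) (hM.trans hle) (h (M+k) hle)
        linarith
    obtain ⟨K, hKgt, hKge⟩ :=
      ((hdiv.eventually_gt_atTop ((2/δ) * μ M + ∑ i ∈ Finset.range M, α i)).and
        (eventually_ge_atTop M)).exists
    have hsplit : ∑ i ∈ Finset.range M, α i + ∑ i ∈ Finset.Ico M K, α i
        = ∑ i ∈ Finset.range K, α i := by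
      rw [Finset.range_eq_Ico, Finset.range_eq_Ico]
      exact Finset.sum_Ico_consecutive (f := α) (Nat.zero_le M) hKge
    have hK2 := key (K - M)
    rw [Nat.add_sub_cancel' hKge] at hK2
    have hμK := hμ K
    have hS : (2/δ) * μ M < ∑ i ∈ Finset.Ico M K, α i := by linarith
    have h5 := mul_lt_mul_of_pos_left hS (half_pos hδ)
    have h6 : δ/2 * (2/δ * μ M) = μ M := by field_simp
    linarith
  obtain ⟨n₀, hn₀N, hn₀β⟩ := hgood N le_rfl
  have hμq : ∀ m, n₀ ≤ m → μ m ≤ 2 * (q:ℝ) := by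
    intro m hm
    induction m, hm using Nat.le_induction with
    | base => have := hω q hq0' n₀ hn₀β; linarith
    | succ m hm ih =>
      by_cases hb : β m ≤ δ
      · have h1 := hω q hq0' m hb
        have h2 := hrec m
        have h3 := hγc m (hn₀N.trans hm)
        have h4 : c * α m ≤ (q:ℝ) := by
          calc c * α m ≤ ((q:ℝ)/A') * A' :=
                mul_le_mul (min_le_right _ _) (hαA' m) (hα m).le
                  (div_nonneg hq0.le hA'pos.le)
            _ = q := div_mul_cancel₀ _ hA'pos.ne'
        nlinarith [mul_nonneg (hα m).le (hβ m)]
      · push_neg at hb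
        have hbm := hbad m (hn₀N.trans hm) hb
        nlinarith [mul_nonneg (le_of_lt (half_pos hδ)) (hα m).le]
  refine ⟨n₀, fun n hn => ?_⟩
  rw [Real.dist_eq, sub_zero, abs_of_nonneg (hμ n)]
  have := hμq n hn
  linarith
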